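/- Fix n ≥ 7 and let f : F_2^n → F_2^n be the Boolean network defined by f(a^i) = a^{i+1}, f(b^i) = a^{i+3}, f(c^i) = a^{i+3}, f(d^i) = a^{i+4} + e^{i+1} for all i, and f(x) = x for every x not of the form a^i, b^i, c^i or d^i. Let T : F_2^n → F_2^n be defined by T(x) = S(x) + e^1, where S is the cyclic shift S(x) = (x_n, x_1, …, x_{n-1}). Then f is T-equivariant: f ∘ T = T ∘ f. -/

import Mathlib

/-- States of a Boolean network on `n` components: `F_2^n`. -/
abbrev St (n : ℕ) := Fin n → ZMod 2

/-- The unit vector `e^i`. -/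
def uv {n : ℕ} (i : Fin n) : St n := fun j => if j = i then 1 else 0

/-- There is an edge from `j` to `i` in the local interaction graph `G(f)(x)`,
i.e. `∂_j f_i (x) = 1`. -/
def hasEdge {n : ℕ} (f : St n → St n) (x : St n) (j i : Fin n) : Prop :=
  f (x + uv j) i ≠ f x i

/-- `(j,i)` is a positive edge of `G(f)(x)`. -/
def edgePos {n : ℕ} (f : St n → St n) (x : St n) (j i : Fin n) : Prop :=
  hasEdge f x j i ∧ x j = f x i

/-- `(j,i)` is a negative edge of `G(f)(x)`. -/
def edgeNeg {n : ℕ} (f : St n → St n) (x : St n) (j i : Fin n) : Prop :=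
  hasEdge f x j i ∧ x j ≠ f x i

/-- The local interaction graph `G(f)(x)` has a negative (elementary, directed) cycle:
a cyclic sequence of pairwise distinct vertices, each consecutive pair being an edge of
`G(f)(x)`, with an odd number of negative edges. -/
def hasNegCycleAt {n : ℕ} (f : St n → St n) (x : St n) : Prop :=
  ∃ (m : ℕ) (v : Fin (m + 1) → Fin n), Function.Injective v ∧
    (∀ k, hasEdge f x (v k) (v (k + 1))) ∧
    Odd (Nat.card {k : Fin (m + 1) // edgeNeg f x (v k) (v (k + 1))})

/-- `f` is an and-net: each coordinate function is a product of literals. -/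
def IsAndNet {n : ℕ} (f : St n → St n) : Prop :=
  ∀ i : Fin n, ∃ P N : Finset (Fin n), Disjoint P N ∧
    ∀ x : St n, f x i = (∏ j ∈ P, x j) * ∏ j ∈ N, (x j + 1)

/-- `e^i` for an integer index `i` (`1`-indexed, taken modulo `n`): `e^{i+n} = e^i`. -/
def eZ (n : ℕ) (i : ℤ) : St n := fun t => if ((t : ℕ) : ℤ) = (i - 1) % (n : ℤ) then 1 else 0

/-- The `2n`-periodic sequence `a^i`: for `1 ≤ i ≤ n`, `a^i = e^{{1,…,i-1}}` and
`a^{n+i}` is the antipode of `a^i`. (Its `1`-indexed coordinate `j = t+1` is `1` iff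
`(i - 1 - j) mod 2n < n`.) -/
def aZ (n : ℕ) (i : ℤ) : St n :=
  fun t => if (i - 2 - ((t : ℕ) : ℤ)) % (2 * (n : ℤ)) < (n : ℤ) then 1 else 0

/-- `b^i = a^i + e^{i+1}`. -/
def bZ (n : ℕ) (i : ℤ) : St n := aZ n i + eZ n (i + 1)

/-- `c^i = a^i + e^{i+2}`. -/
def cZ (n : ℕ) (i : ℤ) : St n := aZ n i + eZ n (i + 2)

/-- `d^i = a^i + e^{i+2} + e^{i+3}`. -/
def dZ (n : ℕ) (i : ℤ) : St n := aZ n i + eZ n (i + 2) + eZ n (i + 3)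

/-- The Boolean network `f` of the second construction (defined by `f(a^i) = a^{i+1}`,
`f(b^i) = f(c^i) = a^{i+3}`, `f(d^i) = a^{i+4} + e^{i+1}`, and `f(x) = x` elsewhere) is
`T`-equivariant, where `T(x) = S(x) + e^1` and `S` is the cyclic shift
`S(x) = (x_n, x_1, …, x_{n-1})`. -/

lemma sig_val' (n : ℕ) (hn : 1 ≤ n) (t : Fin n) :
    ((((t : ℕ) + n - 1) % n : ℕ) : ℤ) = if (t:ℕ) = 0 then (n:ℤ) - 1 else (t:ℤ) - 1 := by
  rcases Nat.eq_zero_or_pos (t:ℕ) with h | h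
  · rw [if_pos h, h, show 0 + n - 1 = n - 1 by omega, Nat.mod_eq_of_lt (by omega)]
    omega
  · rw [if_neg (by omega), show (t:ℕ) + n - 1 = ((t:ℕ) - 1) + n by omega,
      Nat.add_mod_right, Nat.mod_eq_of_lt (by omega : (t:ℕ) - 1 < n)]
    omega

lemma key' (n k : ℤ) (hn : 0 < n) : ((k - n) % (2*n) < n) ↔ ¬ (k % (2*n) < n) := by
  have h2 : (0:ℤ) < 2*n := by omega
  set r := k % (2*n) with hr
  have hr0 : 0 ≤ r := Int.emod_nonneg _ (by omega)
  have hr1 : r < 2*n := Int.emod_lt_of_pos _ h2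
  have h3 : (k - n) % (2*n) = (r + n) % (2*n) := by
    have e1 : (k + n) % (2*n) = (k - n) % (2*n) := by
      conv_lhs => rw [show k + n = (k - n) + 2*n*1 by ring]
      rw [Int.add_mul_emod_self_left]
    have e2 : (k + n) % (2*n) = (r + n) % (2*n) := by
      rw [Int.add_emod k n, Int.add_emod r n, ← hr, Int.emod_eq_of_lt hr0 hr1]
    rw [← e1, e2]
  by_cases hc : r < n
  · have h4 : (r + n) % (2*n) = r + n := Int.emod_eq_of_lt (by omega) (by omega)
    rw [h3, h4]; omega
  · have h4 : (r + n) % (2*n) = r - n := by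
      conv_lhs => rw [show r + n = (r - n) + 2*n*1 by ring]
      rw [Int.add_mul_emod_self_left, Int.emod_eq_of_lt (by omega) (by omega)]
    rw [h3, h4]; omega

lemma eshift' (n : ℕ) (hn : 7 ≤ n) (i : ℤ) (t : Fin n) :
    eZ n i ⟨((t:ℕ) + n - 1) % n, Nat.mod_lt _ (Nat.lt_of_lt_of_le (by norm_num) hn)⟩ = eZ n (i + 1) t := by
  unfold eZ
  rw [show ((⟨((t:ℕ) + n - 1) % n, Nat.mod_lt _ (Nat.lt_of_lt_of_le (by norm_num) hn)⟩ : Fin n) : ℕ)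
      = ((t:ℕ) + n - 1) % n from rfl]
  rw [sig_val' n (by omega) t, show i + 1 - 1 = i by ring]
  have hn' : (0:ℤ) < n := by exact_mod_cast (by omega : 0 < n)
  set r := (i - 1) % (n:ℤ) with hr
  have hr0 : 0 ≤ r := Int.emod_nonneg _ (by omega)
  have hr1 : r < n := Int.emod_lt_of_pos _ hn'
  have hi : i % (n:ℤ) = (r + 1) % (n:ℤ) := by
    rw [show i = (i - 1) + 1 by ring, Int.add_emod (i-1) 1, Int.add_emod r 1, ← hr,
      Int.emod_eq_of_lt hr0 hr1]
  have ht := t.isLt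
  refine if_congr ?_ rfl rfl
  by_cases hcase : r + 1 < n
  · rw [hi, Int.emod_eq_of_lt (by omega) hcase]
    split_ifs with h0 <;> omega
  · rw [hi, show r + 1 = (n:ℤ) by omega, Int.emod_self]
    split_ifs with h0 <;> omega

lemma ashift' (n : ℕ) (hn : 7 ≤ n) (i : ℤ) (t : Fin n) :
    aZ n (i+1) t = aZ n i ⟨((t:ℕ) + n - 1) % n, Nat.mod_lt _ (Nat.lt_of_lt_of_le (by norm_num) hn)⟩ +
      (if (t:ℕ) = 0 then 1 else 0) := by
  unfold aZ
  rw [show ((⟨((t:ℕ) + n - 1) % n, Nat.mod_lt _ (Nat.lt_of_lt_of_le (by norm_num) hn)⟩ : Fin n) : ℕ)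
      = ((t:ℕ) + n - 1) % n from rfl]
  rw [sig_val' n (by omega) t]
  have hn' : (0:ℤ) < n := by exact_mod_cast (by omega : 0 < n)
  by_cases h0 : (t:ℕ) = 0
  · rw [if_pos h0, if_pos h0, h0]
    rw [show i + 1 - 2 - ((0:ℕ):ℤ) = i - 1 by push_cast; ring,
      show i - 2 - ((n:ℤ) - 1) = (i - 1) - (n:ℤ) by ring]
    simp only [key' (n:ℤ) (i-1) hn']
    by_cases hA : (i - 1) % (2*(n:ℤ)) < n
    · simp [hA]
    · simp [hA]; decide
  · rw [if_neg h0, if_neg h0, add_zero,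
      show i + 1 - 2 - ((t:ℕ):ℤ) = i - 2 - (((t:ℕ):ℤ) - 1) by ring]

theorem stmt_10 (n : ℕ) (hn : 7 ≤ n) (f : St n → St n)
    (hfa : ∀ i : ℤ, f (aZ n i) = aZ n (i + 1))
    (hfb : ∀ i : ℤ, f (bZ n i) = aZ n (i + 3))
    (hfc : ∀ i : ℤ, f (cZ n i) = aZ n (i + 3))
    (hfd : ∀ i : ℤ, f (dZ n i) = aZ n (i + 4) + eZ n (i + 1))
    (hfix : ∀ x : St n, (∀ i : ℤ, x ≠ aZ n i ∧ x ≠ bZ n i ∧ x ≠ cZ n i ∧ x ≠ dZ n i) →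
      f x = x)
    (T : St n → St n)
    (hT : ∀ (x : St n) (t : Fin n),
      T x t = x ⟨((t : ℕ) + n - 1) % n, Nat.mod_lt _ (by omega)⟩ +
        (if (t : ℕ) = 0 then 1 else 0)) :
    f ∘ T = T ∘ f := by
  have hn0 : 0 < n := by omega
  have hTa : ∀ i : ℤ, T (aZ n i) = aZ n (i+1) := by
    intro i; funext t; rw [hT]
    exact (ashift' n hn i t).symm
  have hTe : ∀ (x : St n) (j : ℤ), T (x + eZ n j) = T x + eZ n (j+1) := by
    intro x j; funext t
    rw [Pi.add_apply, hT, hT, Pi.add_apply, ← eshift' n hn j t]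
    ring
  have hinj : Function.Injective T := by
    intro x y hxy; funext s
    have hs := s.isLt
    by_cases hc : (s:ℕ) + 1 < n
    · have h1 := congrFun hxy (⟨(s:ℕ)+1, hc⟩ : Fin n)
      rw [hT, hT] at h1
      have h2 := add_right_cancel h1
      have he : (⟨(((⟨(s:ℕ)+1, hc⟩ : Fin n) :ℕ) + n - 1) % n, Nat.mod_lt _ (by omega)⟩ : Fin n) = s := by
        apply Fin.ext
        show ((s:ℕ) + 1 + n - 1) % n = (s:ℕ)
        rw [show (s:ℕ)+1+n-1 = n + (s:ℕ) by omega, Nat.add_mod_left, Nat.mod_eq_of_lt hs]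
      rwa [he] at h2
    · have h1 := congrFun hxy (⟨0, by omega⟩ : Fin n)
      rw [hT, hT] at h1
      have h2 := add_right_cancel h1
      have he : (⟨(((⟨0, by omega⟩ : Fin n) :ℕ) + n - 1) % n, Nat.mod_lt _ (by omega)⟩ : Fin n) = s := by
        apply Fin.ext
        show (0 + n - 1) % n = (s:ℕ)
        rw [show 0+n-1 = n-1 by omega, Nat.mod_eq_of_lt (by omega)]
        omega
      rwa [he] at h2
  have hTb : ∀ i : ℤ, T (bZ n i) = bZ n (i+1) := by
    intro i; unfold bZ; rw [hTe, hTa]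
  have hTc : ∀ i : ℤ, T (cZ n i) = cZ n (i+1) := by
    intro i; unfold cZ; rw [hTe, hTa, show i+1+2 = i+2+1 by ring]
  have hTd : ∀ i : ℤ, T (dZ n i) = dZ n (i+1) := by
    intro i; unfold dZ; rw [hTe, hTe, hTa,
      show i+1+2 = i+2+1 by ring, show i+1+3 = i+3+1 by ring]
  funext x
  simp only [Function.comp_apply]
  by_cases hx : ∀ i : ℤ, x ≠ aZ n i ∧ x ≠ bZ n i ∧ x ≠ cZ n i ∧ x ≠ dZ n i
  · have h2 : f (T x) = T x := by
      apply hfix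
      intro i
      obtain ⟨ha, hb, hcc, hd⟩ := hx (i-1)
      refine ⟨?_, ?_, ?_, ?_⟩
      · intro h; exact ha (hinj (by rw [h, hTa (i-1), show i-1+1 = i by ring]))
      · intro h; exact hb (hinj (by rw [h, hTb (i-1), show i-1+1 = i by ring]))
      · intro h; exact hcc (hinj (by rw [h, hTc (i-1), show i-1+1 = i by ring]))
      · intro h; exact hd (hinj (by rw [h, hTd (i-1), show i-1+1 = i by ring]))
    rw [hfix x hx, h2]
  · simp only [not_forall, not_and_or, ne_eq, not_not] at hx
    obtain ⟨i, h | h | h | h⟩ := hx <;> subst h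
    · rw [hTa, hfa, hfa, hTa]
    · rw [hTb, hfb, hfb, hTa, show i+1+3 = i+3+1 by ring]
    · rw [hTc, hfc, hfc, hTa, show i+1+3 = i+3+1 by ring]
    · rw [hTd, hfd, hfd, hTe, hTa, show i+1+4 = i+4+1 by ring, show i+1+1 = i+1+1 from rfl]
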